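/- Let F ∈ ℂ[X_1, X_2, X_3, X_4, X_5] be the polynomial F = 2·X_1³X_3 + 3·X_1²X_2X_4 + 6·X_1X_3²X_5 + 9·X_2X_3X_4X_5. Then there exists a point x ∈ ℂ^5 with all coordinates nonzero such that F(x) = 0 and all five partial derivatives ∂F/∂X_i vanish at x; that is, the complex hypersurface F = 0 has a singular point on the torus (ℂ∖{0})^5. -/

import Mathlib

open MvPolynomial

lemma pderiv_ofNat'' (i : Fin 5) (n : ℕ) [n.AtLeastTwo] :
    pderiv i (no_index (OfNat.ofNat n) : MvPolynomial (Fin 5) ℂ) = 0 := by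
  rw [← map_ofNat (C : ℂ →+* MvPolynomial (Fin 5) ℂ) n, pderiv_C]

/-- The hypersurface `2X₁³X₃ + 3X₁²X₂X₄ + 6X₁X₃²X₅ + 9X₂X₃X₄X₅ = 0` has a singular
point on the torus `(ℂ∖{0})⁵`. -/
theorem stmt_19 (F : MvPolynomial (Fin 5) ℂ)
    (hF : F = 2 * X 0 ^ 3 * X 2 + 3 * X 0 ^ 2 * X 1 * X 3
      + 6 * X 0 * X 2 ^ 2 * X 4 + 9 * X 1 * X 2 * X 3 * X 4) :
    ∃ x : Fin 5 → ℂ, (∀ i, x i ≠ 0) ∧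
      eval x F = 0 ∧ ∀ i : Fin 5, eval x (pderiv i F) = 0 := by
  refine ⟨![1, 1, 1, -2/3, -1/3], ?_, ?_, ?_⟩
  · intro i; fin_cases i <;> norm_num
  · subst hF
    simp only [map_add, map_mul, map_pow, eval_X, map_ofNat]
    simp
    norm_num [Matrix.cons_val_zero, Matrix.cons_val_one]
  · intro i
    subst hF
    fin_cases i <;>
    · simp only [map_add, map_mul, map_pow, pderiv_mul, pderiv_pow, pderiv_X,
        map_ofNat, map_add, pderiv_ofNat'']
      simp
      norm_num
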